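/- Let α₁, α₂ > 0, μ > 1, and 0 ≤ δ₁ < 2√(α₁α₂). Then for every V₀ ≥ 0, the improper integral I = ∫₀^{V₀} dV / (α₁V^(1+1/μ) + α₂V^(1−1/μ) − δ₁V) converges and satisfies I ≤ (μ/(α₁k₁))·(π/2 − arctan(k₂)), where k₁ = √((4α₁α₂ − δ₁²)/(4α₁²)) and k₂ = −δ₁/√(4α₁α₂ − δ₁²). -/

import Mathlib

open Real MeasureTheory intervalIntegral

lemma stmt_6_aux (α₁ μ V m d k₁ : ℝ) (h1 : 0 < α₁) (hμ0 : 0 < μ) (hV0 : 0 < V)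
    (hm : 0 < m) (hk₁ : 0 < k₁) :
    1 / (V / m * (α₁ * m ^ 2 - 2 * α₁ * d * m + (α₁ * k₁ ^ 2 + α₁ * d ^ 2))) =
      μ / (α₁ * k₁) * (1 / (1 + ((m - d) / k₁) ^ 2) * (1 / μ * (m / V) / k₁)) := by
  have hne : (1:ℝ) + ((m - d) / k₁) ^ 2 ≠ 0 := by positivity
  have hquad : (0:ℝ) < α₁ * m ^ 2 - 2 * α₁ * d * m + (α₁ * k₁ ^ 2 + α₁ * d ^ 2) := by
    nlinarith [mul_nonneg h1.le (sq_nonneg (m - d)), mul_pos h1 (pow_pos hk₁ 2)]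
  field_simp
  rw [div_eq_one_iff_eq (by nlinarith [sq_nonneg (m - d), pow_pos hk₁ 2])]
  ring

theorem stmt_6 (α₁ α₂ μ δ₁ γ₁ γ₂ : ℝ) (h1 : 0 < α₁) (h2 : 0 < α₂) (hμ : 1 < μ)
    (hγ₁ : γ₁ = 1 + 1 / μ) (hγ₂ : γ₂ = 1 - 1 / μ)
    (hδ0 : 0 ≤ δ₁) (hδ : δ₁ < 2 * Real.sqrt (α₁ * α₂)) (V₀ : ℝ) (hV₀ : 0 ≤ V₀) :
    IntervalIntegrable (fun V => 1 / (α₁ * V ^ γ₁ + α₂ * V ^ γ₂ - δ₁ * V))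
      volume 0 V₀ ∧
    ∫ V in (0:ℝ)..V₀, 1 / (α₁ * V ^ γ₁ + α₂ * V ^ γ₂ - δ₁ * V) ≤
      μ / (α₁ * Real.sqrt ((4 * α₁ * α₂ - δ₁ ^ 2) / (4 * α₁ ^ 2))) *
        (Real.pi / 2 - Real.arctan (-δ₁ / Real.sqrt (4 * α₁ * α₂ - δ₁ ^ 2))) := by
  have hμ0 : 0 < μ := lt_trans one_pos hμ
  have hμ' : (0:ℝ) < 1/μ := by positivity
  have hμ1 : 1/μ < 1 := by rw [div_lt_one hμ0]; exact hμ
  have hc : 0 < 4 * α₁ * α₂ - δ₁ ^ 2 := by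
    nlinarith [Real.sq_sqrt (mul_nonneg h1.le h2.le), Real.sqrt_nonneg (α₁ * α₂)]
  set c : ℝ := 4 * α₁ * α₂ - δ₁ ^ 2 with hcdef
  have hsc : 0 < Real.sqrt c := Real.sqrt_pos.mpr hc
  set d : ℝ := δ₁ / (2 * α₁) with hddef
  set k₁ : ℝ := Real.sqrt c / (2 * α₁) with hk₁def
  have hk₁ : 0 < k₁ := div_pos hsc (by positivity)
  have hk₁sq : k₁ ^ 2 = c / (4 * α₁ ^ 2) := by
    rw [hk₁def, div_pow, Real.sq_sqrt hc.le]; ring_nf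
  have hα₂ : α₂ = α₁ * k₁ ^ 2 + α₁ * d ^ 2 := by
    rw [hk₁sq, hddef, hcdef]; field_simp; ring
  have hδ₁d : δ₁ = 2 * α₁ * d := by rw [hddef]; field_simp
  have hsqrtdiv : Real.sqrt (c / (4 * α₁ ^ 2)) = k₁ := by
    rw [Real.sqrt_div hc.le, hk₁def]
    congr 1
    rw [show (4:ℝ) * α₁ ^ 2 = (2 * α₁) ^ 2 by ring, Real.sqrt_sq (by positivity)]
  have hk₂ : -δ₁ / Real.sqrt c = -d / k₁ := by
    rw [hddef, hk₁def]
    field_simp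
  clear_value c d k₁
  -- the denominator, rewritten for positive V
  have hDform : ∀ V : ℝ, 0 < V →
      α₁ * V ^ γ₁ + α₂ * V ^ γ₂ - δ₁ * V
        = (V / V ^ (1/μ)) * (α₁ * (V ^ (1/μ)) ^ 2 - δ₁ * V ^ (1/μ) + α₂) := by
    intro V hV
    have hm : 0 < V ^ (1/μ) := Real.rpow_pos_of_pos hV _
    have e1 : V ^ γ₁ = V * V ^ (1/μ) := by
      rw [hγ₁, Real.rpow_add hV, Real.rpow_one]
    have e2 : V ^ γ₂ = V / V ^ (1/μ) := by
      rw [hγ₂, Real.rpow_sub hV, Real.rpow_one]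
    rw [e1, e2]
    field_simp
    ring
  have hquadpos : ∀ m : ℝ, 0 < α₁ * m ^ 2 - δ₁ * m + α₂ := by
    intro m
    rw [hδ₁d, hα₂]
    nlinarith [mul_nonneg h1.le (sq_nonneg (m - d)), mul_pos h1 (pow_pos hk₁ 2)]
  have hquadge : ∀ m : ℝ, c / (4 * α₁) ≤ α₁ * m ^ 2 - δ₁ * m + α₂ := by
    intro m
    have hck : c / (4 * α₁) = α₁ * k₁ ^ 2 := by
      rw [hk₁sq]; field_simp
    rw [hck, hδ₁d, hα₂]
    nlinarith [mul_nonneg h1.le (sq_nonneg (m - d))]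
  have hDpos : ∀ V : ℝ, 0 < V → 0 < α₁ * V ^ γ₁ + α₂ * V ^ γ₂ - δ₁ * V := by
    intro V hV
    rw [hDform V hV]
    have hm : 0 < V ^ (1/μ) := Real.rpow_pos_of_pos hV _
    exact mul_pos (div_pos hV hm) (hquadpos _)
  -- continuity of the denominator
  have hcontD : Continuous fun V : ℝ => α₁ * V ^ γ₁ + α₂ * V ^ γ₂ - δ₁ * V := by
    have c1 : Continuous fun V : ℝ => V ^ γ₁ :=
      Real.continuous_rpow_const (by rw [hγ₁]; positivity)
    have c2 : Continuous fun V : ℝ => V ^ γ₂ :=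
      Real.continuous_rpow_const (by rw [hγ₂]; linarith)
    exact ((continuous_const.mul c1).add (continuous_const.mul c2)).sub
      (continuous_const.mul continuous_id)
  -- integrability
  have hint : IntervalIntegrable (fun V => 1 / (α₁ * V ^ γ₁ + α₂ * V ^ γ₂ - δ₁ * V))
      volume 0 V₀ := by
    have hexp : (-1:ℝ) < 1/μ - 1 := by linarith
    have hg : IntervalIntegrable (fun V : ℝ => (4 * α₁ / c) * V ^ (1/μ - 1)) volume 0 V₀ :=
      (intervalIntegrable_rpow' hexp).const_mul _
    apply hg.mono_fun
    · exact (measurable_const.div hcontD.measurable).aestronglyMeasurable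
    · rw [Set.uIoc_of_le hV₀]
      filter_upwards [ae_restrict_mem measurableSet_Ioc] with x hx
      have hx0 : 0 < x := hx.1
      have hm : 0 < x ^ (1/μ) := Real.rpow_pos_of_pos hx0 _
      have hD := hDpos x hx0
      have hb : 1 / (α₁ * x ^ γ₁ + α₂ * x ^ γ₂ - δ₁ * x) ≤ (4 * α₁ / c) * x ^ (1/μ - 1) := by
        have hlow : (x / x ^ (1/μ)) * (c / (4 * α₁)) ≤ α₁ * x ^ γ₁ + α₂ * x ^ γ₂ - δ₁ * x := by
          rw [hDform x hx0]
          exact mul_le_mul_of_nonneg_left (hquadge _) (div_pos hx0 hm).le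
        have hlowpos : 0 < (x / x ^ (1/μ)) * (c / (4 * α₁)) := by positivity
        have hstep := one_div_le_one_div_of_le hlowpos hlow
        refine hstep.trans (le_of_eq ?_)
        have e3 : x ^ (1/μ - 1) = x ^ (1/μ) / x := by
          rw [Real.rpow_sub hx0, Real.rpow_one]
        rw [e3]
        field_simp
      rw [Real.norm_eq_abs, Real.norm_eq_abs, abs_of_nonneg (by positivity),
        abs_of_nonneg (by positivity : (0:ℝ) ≤ (4 * α₁ / c) * x ^ (1/μ - 1))]
      exact hb
  refine ⟨hint, ?_⟩
  -- antiderivative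
  set K : ℝ := μ / (α₁ * k₁) with hKdef
  clear_value K
  have hK : 0 < K := by rw [hKdef]; positivity
  set F : ℝ → ℝ := fun V => K * Real.arctan ((V ^ (1/μ) - d) / k₁) with hFdef
  clear_value F
  have hFcont : ContinuousOn F (Set.Icc 0 V₀) := by
    rw [hFdef]
    have h1c : Continuous fun V : ℝ => V ^ (1/μ) := Real.continuous_rpow_const hμ'.le
    have h2c : Continuous fun V : ℝ => (V ^ (1/μ) - d) / k₁ :=
      (h1c.sub continuous_const).div_const k₁
    exact (continuous_const.mul (Real.continuous_arctan.comp h2c)).continuousOn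
  have hderiv : ∀ V ∈ Set.Ioo 0 V₀,
      HasDerivAt F (1 / (α₁ * V ^ γ₁ + α₂ * V ^ γ₂ - δ₁ * V)) V := by
    intro V hV
    have hV0 : 0 < V := hV.1
    have hm : 0 < V ^ (1/μ) := Real.rpow_pos_of_pos hV0 _
    have h1' : HasDerivAt (fun x : ℝ => x ^ (1/μ)) (1/μ * V ^ (1/μ - 1)) V := by
      simpa using Real.hasDerivAt_rpow_const (p := 1/μ) (Or.inl hV0.ne')
    have h3 := (((h1'.sub_const d).div_const k₁).arctan).const_mul K
    rw [hFdef]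
    convert h3 using 1
    · rfl
    · rfl
    have e3 : V ^ (1/μ - 1) = V ^ (1/μ) / V := by
      rw [Real.rpow_sub hV0, Real.rpow_one]
    rw [hDform V hV0, e3, hKdef, hδ₁d, hα₂]
    generalize V ^ (1/μ) = m at hm ⊢
    exact stmt_6_aux α₁ μ V m d k₁ h1 hμ0 hV0 hm hk₁
  have heq := integral_eq_sub_of_hasDerivAt_of_le hV₀ hFcont hderiv hint
  rw [heq]
  have hF0 : F 0 = K * Real.arctan (-d / k₁) := by
    simp only [hFdef]
    rw [Real.zero_rpow hμ'.ne', zero_sub, neg_div]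
  have hFV : F V₀ ≤ K * (Real.pi / 2) := by
    rw [hFdef]
    exact mul_le_mul_of_nonneg_left (Real.arctan_lt_pi_div_two _).le hK.le
  have hrhs : μ / (α₁ * Real.sqrt (c / (4 * α₁ ^ 2))) *
      (Real.pi / 2 - Real.arctan (-δ₁ / Real.sqrt c))
      = K * (Real.pi / 2) - K * Real.arctan (-d / k₁) := by
    rw [hsqrtdiv, hk₂, ← hKdef]
    ring
  rw [hrhs, hF0]
  linarith
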